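/- Let α = 0.75, τ = 1.58 and ν₀ = 0.88, and define the transfer function W(p) = 1/(3α − 2 − α e^{−τp} − p) for complex p. Then for every ω ∈ ℝ the frequency inequality |W(−ν₀ + iω)| ≤ 0.64 holds; equivalently, |(3α − 2 + ν₀) − iω − α e^{τν₀} e^{−iτω}| ≥ 1/0.64 for all ω ∈ ℝ. In particular |W(−ν₀ + iω)| < Λ⁻¹ for the Lipschitz constant Λ = 0.45. -/

import Mathlib

/-- The transfer function `W(p) = 1/(3α - 2 - α e^{-τp} - p)` of the linear part of the
Suarez–Schopf model rewritten around the symmetric equilibria. -/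
noncomputable def SStransfer (α τ : ℝ) (p : ℂ) : ℂ :=
  1 / (3 * (α : ℂ) - 2 - (α : ℂ) * Complex.exp (-(τ : ℂ) * p) - p)

lemma cos_sin_window {x : ℝ} (h1 : -1 ≤ x) (h2 : x ≤ 1) :
    1 - x^2/2 - 5/96*x^4 ≤ Real.cos x ∧ Real.cos x ≤ 1 - x^2/2 + 5/96*x^4 ∧
    x - x^3/6 - 5/96*x^4 ≤ Real.sin x ∧ Real.sin x ≤ x - x^3/6 + 5/96*x^4 := by
  have hax : |x| ≤ 1 := abs_le.mpr ⟨h1, h2⟩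
  have hc := Real.cos_bound hax
  have hs := Real.sin_bound hax
  have h4 : |x|^4 = x^4 := by
    rw [pow_abs]; exact abs_of_nonneg (by positivity)
  have h5 : |x|^5/100 ≤ x^4*(5/96) := by
    have h0 := abs_nonneg x
    have h6 : |x|^5 ≤ |x|^4 := by nlinarith [mul_le_mul_of_nonneg_left hax (pow_nonneg h0 4)]
    nlinarith [pow_nonneg h0 4]
  rw [h4, abs_le] at hc
  rw [abs_le] at hs
  exact ⟨by linarith [hc.1], by linarith [hc.2], by linarith [hs.1, h5], by linarith [hs.2, h5]⟩

set_option maxHeartbeats 1000000 in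
lemma case0 (A ω : ℝ) (hA1 : (3.012:ℝ) ≤ A) (hA2 : A ≤ 3.013)
    (hl : (0:ℝ) ≤ ω) (hu : ω ≤ ((1:ℝ)/4)) :
    (2.44140625:ℝ) ≤ (1.13 - A * Real.cos (1.58*ω))^2 + (A * Real.sin (1.58*ω) - ω)^2 := by
  have hpl : (3.141592:ℝ) < Real.pi := Real.pi_gt_d6
  have hpu : Real.pi < (3.141593:ℝ) := Real.pi_lt_d6
  obtain ⟨x, hx⟩ : ∃ y : ℝ, y = 1.58*ω := ⟨_, rfl⟩
  have hd1 : (0:ℝ) ≤ x := by rw [hx]; linarith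
  have hd2 : x ≤ ((79:ℝ)/200) := by rw [hx]; linarith
  have hm1 : (-1:ℝ) ≤ x := by linarith
  have hm2 : x ≤ (1:ℝ) := by linarith
  obtain ⟨hc1, hc2, hs1, hs2⟩ := cos_sin_window hm1 hm2
  have hx2u : x^2 ≤ ((6241:ℝ)/40000) := by nlinarith [mul_nonneg (by linarith : (0:ℝ) ≤ x - (0:ℝ)) (by linarith : (0:ℝ) ≤ ((79:ℝ)/200) - x)]
  have hx2l : (0:ℝ) ≤ x^2 := by positivity
  have hx4 : x^4 ≤ ((3043:ℝ)/125000) := by nlinarith [mul_nonneg (by linarith : (0:ℝ) ≤ ((6241:ℝ)/40000) - x^2) (by positivity : (0:ℝ) ≤ ((6241:ℝ)/40000) + x^2)]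
  have hx3u : x^3 ≤ ((6163:ℝ)/100000) := by nlinarith [mul_nonneg (by linarith : (0:ℝ) ≤ ((79:ℝ)/200) - x) (by nlinarith [sq_nonneg (2*x + ((79:ℝ)/200))] : (0:ℝ) ≤ x^2 + ((79:ℝ)/200)*x + ((79:ℝ)/200)^2)]
  have hx3l : (0:ℝ) ≤ x^3 := by nlinarith [mul_nonneg (by linarith : (0:ℝ) ≤ x - (0:ℝ)) (by nlinarith [sq_nonneg (2*x + (0:ℝ))] : (0:ℝ) ≤ x^2 + (0:ℝ)*x + (0:ℝ)^2)]
  have hC1 : ((920719:ℝ)/1000000) ≤ Real.cos x := by linarith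
  have hC2 : Real.cos x ≤ ((250317:ℝ)/250000) := by linarith
  have hS1 : ((-577:ℝ)/50000) ≤ Real.sin x := by linarith
  have hS2 : Real.sin x ≤ ((99067:ℝ)/250000) := by linarith
  rw [← hx]
  have hB1 : 1.13 - A * (Real.cos x) ≤ ((-328641:ℝ)/200000) := by nlinarith
  nlinarith [hB1, sq_nonneg (1.13 - A * (Real.cos x) - ((-328641:ℝ)/200000)), sq_nonneg (A * (Real.sin x) - ω)]

set_option maxHeartbeats 1000000 in
lemma case1 (A ω : ℝ) (hA1 : (3.012:ℝ) ≤ A) (hA2 : A ≤ 3.013)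
    (hl : ((1:ℝ)/4) ≤ ω) (hu : ω ≤ ((3:ℝ)/10)) :
    (2.44140625:ℝ) ≤ (1.13 - A * Real.cos (1.58*ω))^2 + (A * Real.sin (1.58*ω) - ω)^2 := by
  have hpl : (3.141592:ℝ) < Real.pi := Real.pi_gt_d6
  have hpu : Real.pi < (3.141593:ℝ) := Real.pi_lt_d6
  obtain ⟨x, hx⟩ : ∃ y : ℝ, y = 1.58*ω := ⟨_, rfl⟩
  have hd1 : ((79:ℝ)/200) ≤ x := by rw [hx]; linarith
  have hd2 : x ≤ ((237:ℝ)/500) := by rw [hx]; linarith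
  have hm1 : (-1:ℝ) ≤ x := by linarith
  have hm2 : x ≤ (1:ℝ) := by linarith
  obtain ⟨hc1, hc2, hs1, hs2⟩ := cos_sin_window hm1 hm2
  have hx2u : x^2 ≤ ((56169:ℝ)/250000) := by nlinarith [mul_nonneg (by linarith : (0:ℝ) ≤ x - ((79:ℝ)/200)) (by linarith : (0:ℝ) ≤ ((237:ℝ)/500) - x)]
  have hx2l : ((6241:ℝ)/40000) ≤ x^2 := by nlinarith [mul_nonneg (by linarith : (0:ℝ) ≤ x - ((79:ℝ)/200)) (by linarith : (0:ℝ) ≤ x + ((79:ℝ)/200))]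
  have hx4 : x^4 ≤ ((631:ℝ)/12500) := by nlinarith [mul_nonneg (by linarith : (0:ℝ) ≤ ((56169:ℝ)/250000) - x^2) (by positivity : (0:ℝ) ≤ ((56169:ℝ)/250000) + x^2)]
  have hx3u : x^3 ≤ ((106497:ℝ)/1000000) := by nlinarith [mul_nonneg (by linarith : (0:ℝ) ≤ ((237:ℝ)/500) - x) (by nlinarith [sq_nonneg (2*x + ((237:ℝ)/500))] : (0:ℝ) ≤ x^2 + ((237:ℝ)/500)*x + ((237:ℝ)/500)^2)]
  have hx3l : ((61629:ℝ)/1000000) ≤ x^3 := by nlinarith [mul_nonneg (by linarith : (0:ℝ) ≤ x - ((79:ℝ)/200)) (by nlinarith [sq_nonneg (2*x + ((79:ℝ)/200))] : (0:ℝ) ≤ x^2 + ((79:ℝ)/200)*x + ((79:ℝ)/200)^2)]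
  have hC1 : ((110629:ℝ)/125000) ≤ Real.cos x := by linarith
  have hC2 : Real.cos x ≤ ((924617:ℝ)/1000000) := by linarith
  have hS1 : ((374621:ℝ)/1000000) ≤ Real.sin x := by linarith
  have hS2 : Real.sin x ≤ ((233179:ℝ)/500000) := by linarith
  rw [← hx]
  have hB1 : 1.13 - A * (Real.cos x) ≤ ((-383929:ℝ)/250000) := by nlinarith
  have hB2 : ((414179:ℝ)/500000) ≤ A * (Real.sin x) - ω := by nlinarith
  nlinarith [hB1, sq_nonneg (1.13 - A * (Real.cos x) - ((-383929:ℝ)/250000)), hB2, sq_nonneg (A * (Real.sin x) - ω - ((414179:ℝ)/500000))]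

set_option maxHeartbeats 1000000 in
lemma case2 (A ω : ℝ) (hA1 : (3.012:ℝ) ≤ A) (hA2 : A ≤ 3.013)
    (hl : ((3:ℝ)/10) ≤ ω) (hu : ω ≤ ((9:ℝ)/25)) :
    (2.44140625:ℝ) ≤ (1.13 - A * Real.cos (1.58*ω))^2 + (A * Real.sin (1.58*ω) - ω)^2 := by
  have hpl : (3.141592:ℝ) < Real.pi := Real.pi_gt_d6
  have hpu : Real.pi < (3.141593:ℝ) := Real.pi_lt_d6
  obtain ⟨x, hx⟩ : ∃ y : ℝ, y = 1.58*ω := ⟨_, rfl⟩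
  have hd1 : ((237:ℝ)/500) ≤ x := by rw [hx]; linarith
  have hd2 : x ≤ ((711:ℝ)/1250) := by rw [hx]; linarith
  have hm1 : (-1:ℝ) ≤ x := by linarith
  have hm2 : x ≤ (1:ℝ) := by linarith
  obtain ⟨hc1, hc2, hs1, hs2⟩ := cos_sin_window hm1 hm2
  have hx2u : x^2 ≤ ((161767:ℝ)/500000) := by nlinarith [mul_nonneg (by linarith : (0:ℝ) ≤ x - ((237:ℝ)/500)) (by linarith : (0:ℝ) ≤ ((711:ℝ)/1250) - x)]
  have hx2l : ((56169:ℝ)/250000) ≤ x^2 := by nlinarith [mul_nonneg (by linarith : (0:ℝ) ≤ x - ((237:ℝ)/500)) (by linarith : (0:ℝ) ≤ x + ((237:ℝ)/500))]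
  have hx4 : x^4 ≤ ((4187:ℝ)/40000) := by nlinarith [mul_nonneg (by linarith : (0:ℝ) ≤ ((161767:ℝ)/500000) - x^2) (by positivity : (0:ℝ) ≤ ((161767:ℝ)/500000) + x^2)]
  have hx3u : x^3 ≤ ((92013:ℝ)/500000) := by nlinarith [mul_nonneg (by linarith : (0:ℝ) ≤ ((711:ℝ)/1250) - x) (by nlinarith [sq_nonneg (2*x + ((711:ℝ)/1250))] : (0:ℝ) ≤ x^2 + ((711:ℝ)/1250)*x + ((711:ℝ)/1250)^2)]
  have hx3l : ((1664:ℝ)/15625) ≤ x^3 := by nlinarith [mul_nonneg (by linarith : (0:ℝ) ≤ x - ((237:ℝ)/500)) (by nlinarith [sq_nonneg (2*x + ((237:ℝ)/500))] : (0:ℝ) ≤ x^2 + ((237:ℝ)/500)*x + ((237:ℝ)/500)^2)]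
  have hC1 : ((832781:ℝ)/1000000) ≤ Real.cos x := by linarith
  have hC2 : Real.cos x ≤ ((446557:ℝ)/500000) := by linarith
  have hS1 : ((437877:ℝ)/1000000) ≤ Real.sin x := by linarith
  have hS2 : Real.sin x ≤ ((556503:ℝ)/1000000) := by linarith
  rw [← hx]
  have hB1 : 1.13 - A * (Real.cos x) ≤ ((-43073:ℝ)/31250) := by nlinarith
  have hB2 : ((191777:ℝ)/200000) ≤ A * (Real.sin x) - ω := by nlinarith
  nlinarith [hB1, sq_nonneg (1.13 - A * (Real.cos x) - ((-43073:ℝ)/31250)), hB2, sq_nonneg (A * (Real.sin x) - ω - ((191777:ℝ)/200000))]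

set_option maxHeartbeats 1000000 in
lemma case3 (A ω : ℝ) (hA1 : (3.012:ℝ) ≤ A) (hA2 : A ≤ 3.013)
    (hl : ((9:ℝ)/25) ≤ ω) (hu : ω ≤ ((41:ℝ)/100)) :
    (2.44140625:ℝ) ≤ (1.13 - A * Real.cos (1.58*ω))^2 + (A * Real.sin (1.58*ω) - ω)^2 := by
  have hpl : (3.141592:ℝ) < Real.pi := Real.pi_gt_d6
  have hpu : Real.pi < (3.141593:ℝ) := Real.pi_lt_d6
  obtain ⟨x, hx⟩ : ∃ y : ℝ, y = 1.58*ω := ⟨_, rfl⟩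
  have hd1 : ((711:ℝ)/1250) ≤ x := by rw [hx]; linarith
  have hd2 : x ≤ ((3239:ℝ)/5000) := by rw [hx]; linarith
  have hm1 : (-1:ℝ) ≤ x := by linarith
  have hm2 : x ≤ (1:ℝ) := by linarith
  obtain ⟨hc1, hc2, hs1, hs2⟩ := cos_sin_window hm1 hm2
  have hx2u : x^2 ≤ ((83929:ℝ)/200000) := by nlinarith [mul_nonneg (by linarith : (0:ℝ) ≤ x - ((711:ℝ)/1250)) (by linarith : (0:ℝ) ≤ ((3239:ℝ)/5000) - x)]
  have hx2l : ((323533:ℝ)/1000000) ≤ x^2 := by nlinarith [mul_nonneg (by linarith : (0:ℝ) ≤ x - ((711:ℝ)/1250)) (by linarith : (0:ℝ) ≤ x + ((711:ℝ)/1250))]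
  have hx4 : x^4 ≤ ((88051:ℝ)/500000) := by nlinarith [mul_nonneg (by linarith : (0:ℝ) ≤ ((83929:ℝ)/200000) - x^2) (by positivity : (0:ℝ) ≤ ((83929:ℝ)/200000) + x^2)]
  have hx3u : x^3 ≤ ((135923:ℝ)/500000) := by nlinarith [mul_nonneg (by linarith : (0:ℝ) ≤ ((3239:ℝ)/5000) - x) (by nlinarith [sq_nonneg (2*x + ((3239:ℝ)/5000))] : (0:ℝ) ≤ x^2 + ((3239:ℝ)/5000)*x + ((3239:ℝ)/5000)^2)]
  have hx3l : ((7361:ℝ)/40000) ≤ x^3 := by nlinarith [mul_nonneg (by linarith : (0:ℝ) ≤ x - ((711:ℝ)/1250)) (by nlinarith [sq_nonneg (2*x + ((711:ℝ)/1250))] : (0:ℝ) ≤ x^2 + ((711:ℝ)/1250)*x + ((711:ℝ)/1250)^2)]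
  have hC1 : ((156201:ℝ)/200000) ≤ Real.cos x := by linarith
  have hC2 : Real.cos x ≤ ((423703:ℝ)/500000) := by linarith
  have hS1 : ((6429:ℝ)/12500) ≤ Real.sin x := by linarith
  have hS2 : Real.sin x ≤ ((313151:ℝ)/500000) := by linarith
  rw [← hx]
  have hB1 : 1.13 - A * (Real.cos x) ≤ ((-1222387:ℝ)/1000000) := by nlinarith
  have hB2 : ((1139131:ℝ)/1000000) ≤ A * (Real.sin x) - ω := by nlinarith
  nlinarith [hB1, sq_nonneg (1.13 - A * (Real.cos x) - ((-1222387:ℝ)/1000000)), hB2, sq_nonneg (A * (Real.sin x) - ω - ((1139131:ℝ)/1000000))]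

set_option maxHeartbeats 1000000 in
lemma case4 (A ω : ℝ) (hA1 : (3.012:ℝ) ≤ A) (hA2 : A ≤ 3.013)
    (hl : ((41:ℝ)/100) ≤ ω) (hu : ω ≤ ((9:ℝ)/20)) :
    (2.44140625:ℝ) ≤ (1.13 - A * Real.cos (1.58*ω))^2 + (A * Real.sin (1.58*ω) - ω)^2 := by
  have hpl : (3.141592:ℝ) < Real.pi := Real.pi_gt_d6
  have hpu : Real.pi < (3.141593:ℝ) := Real.pi_lt_d6
  obtain ⟨x, hx⟩ : ∃ y : ℝ, y = 1.58*ω := ⟨_, rfl⟩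
  have hd1 : ((3239:ℝ)/5000) ≤ x := by rw [hx]; linarith
  have hd2 : x ≤ ((711:ℝ)/1000) := by rw [hx]; linarith
  have hm1 : (-1:ℝ) ≤ x := by linarith
  have hm2 : x ≤ (1:ℝ) := by linarith
  obtain ⟨hc1, hc2, hs1, hs2⟩ := cos_sin_window hm1 hm2
  have hx2u : x^2 ≤ ((505521:ℝ)/1000000) := by nlinarith [mul_nonneg (by linarith : (0:ℝ) ≤ x - ((3239:ℝ)/5000)) (by linarith : (0:ℝ) ≤ ((711:ℝ)/1000) - x)]
  have hx2l : ((104911:ℝ)/250000) ≤ x^2 := by nlinarith [mul_nonneg (by linarith : (0:ℝ) ≤ x - ((3239:ℝ)/5000)) (by linarith : (0:ℝ) ≤ x + ((3239:ℝ)/5000))]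
  have hx4 : x^4 ≤ ((3993:ℝ)/15625) := by nlinarith [mul_nonneg (by linarith : (0:ℝ) ≤ ((505521:ℝ)/1000000) - x^2) (by positivity : (0:ℝ) ≤ ((505521:ℝ)/1000000) + x^2)]
  have hx3u : x^3 ≤ ((179713:ℝ)/500000) := by nlinarith [mul_nonneg (by linarith : (0:ℝ) ≤ ((711:ℝ)/1000) - x) (by nlinarith [sq_nonneg (2*x + ((711:ℝ)/1000))] : (0:ℝ) ≤ x^2 + ((711:ℝ)/1000)*x + ((711:ℝ)/1000)^2)]
  have hx3l : ((54369:ℝ)/200000) ≤ x^3 := by nlinarith [mul_nonneg (by linarith : (0:ℝ) ≤ x - ((3239:ℝ)/5000)) (by nlinarith [sq_nonneg (2*x + ((3239:ℝ)/5000))] : (0:ℝ) ≤ x^2 + ((3239:ℝ)/5000)*x + ((3239:ℝ)/5000)^2)]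
  have hC1 : ((733929:ℝ)/1000000) ≤ Real.cos x := by linarith
  have hC2 : Real.cos x ≤ ((25109:ℝ)/31250) := by linarith
  have hS1 : ((114917:ℝ)/200000) ≤ Real.sin x := by linarith
  have hS2 : Real.sin x ≤ ((679003:ℝ)/1000000) := by linarith
  rw [← hx]
  have hB1 : 1.13 - A * (Real.cos x) ≤ ((-540297:ℝ)/500000) := by nlinarith
  have hB2 : ((25613:ℝ)/20000) ≤ A * (Real.sin x) - ω := by nlinarith
  nlinarith [hB1, sq_nonneg (1.13 - A * (Real.cos x) - ((-540297:ℝ)/500000)), hB2, sq_nonneg (A * (Real.sin x) - ω - ((25613:ℝ)/20000))]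

set_option maxHeartbeats 1000000 in
lemma case5 (A ω : ℝ) (hA1 : (3.012:ℝ) ≤ A) (hA2 : A ≤ 3.013)
    (hl : ((9:ℝ)/20) ≤ ω) (hu : ω ≤ ((12:ℝ)/25)) :
    (2.44140625:ℝ) ≤ (1.13 - A * Real.cos (1.58*ω))^2 + (A * Real.sin (1.58*ω) - ω)^2 := by
  have hpl : (3.141592:ℝ) < Real.pi := Real.pi_gt_d6
  have hpu : Real.pi < (3.141593:ℝ) := Real.pi_lt_d6
  obtain ⟨x, hx⟩ : ∃ y : ℝ, y = 1.58*ω := ⟨_, rfl⟩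
  have hd1 : ((711:ℝ)/1000) ≤ x := by rw [hx]; linarith
  have hd2 : x ≤ ((474:ℝ)/625) := by rw [hx]; linarith
  have hm1 : (-1:ℝ) ≤ x := by linarith
  have hm2 : x ≤ (1:ℝ) := by linarith
  obtain ⟨hc1, hc2, hs1, hs2⟩ := cos_sin_window hm1 hm2
  have hx2u : x^2 ≤ ((575171:ℝ)/1000000) := by nlinarith [mul_nonneg (by linarith : (0:ℝ) ≤ x - ((711:ℝ)/1000)) (by linarith : (0:ℝ) ≤ ((474:ℝ)/625) - x)]
  have hx2l : ((505521:ℝ)/1000000) ≤ x^2 := by nlinarith [mul_nonneg (by linarith : (0:ℝ) ≤ x - ((711:ℝ)/1000)) (by linarith : (0:ℝ) ≤ x + ((711:ℝ)/1000))]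
  have hx4 : x^4 ≤ ((165411:ℝ)/500000) := by nlinarith [mul_nonneg (by linarith : (0:ℝ) ≤ ((575171:ℝ)/1000000) - x^2) (by positivity : (0:ℝ) ≤ ((575171:ℝ)/1000000) + x^2)]
  have hx3u : x^3 ≤ ((43621:ℝ)/100000) := by nlinarith [mul_nonneg (by linarith : (0:ℝ) ≤ ((474:ℝ)/625) - x) (by nlinarith [sq_nonneg (2*x + ((474:ℝ)/625))] : (0:ℝ) ≤ x^2 + ((474:ℝ)/625)*x + ((474:ℝ)/625)^2)]
  have hx3l : ((14377:ℝ)/40000) ≤ x^3 := by nlinarith [mul_nonneg (by linarith : (0:ℝ) ≤ x - ((711:ℝ)/1000)) (by nlinarith [sq_nonneg (2*x + ((711:ℝ)/1000))] : (0:ℝ) ≤ x^2 + ((711:ℝ)/1000)*x + ((711:ℝ)/1000)^2)]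
  have hC1 : ((43449:ℝ)/62500) ≤ Real.cos x := by linarith
  have hC2 : Real.cos x ≤ ((76447:ℝ)/100000) := by linarith
  have hS1 : ((155267:ℝ)/250000) ≤ Real.sin x := by linarith
  have hS2 : Real.sin x ≤ ((715727:ℝ)/1000000) := by linarith
  rw [← hx]
  have hB1 : 1.13 - A * (Real.cos x) ≤ ((-481947:ℝ)/500000) := by nlinarith
  have hB2 : ((21729:ℝ)/15625) ≤ A * (Real.sin x) - ω := by nlinarith
  nlinarith [hB1, sq_nonneg (1.13 - A * (Real.cos x) - ((-481947:ℝ)/500000)), hB2, sq_nonneg (A * (Real.sin x) - ω - ((21729:ℝ)/15625))]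

set_option maxHeartbeats 1000000 in
lemma case6 (A ω : ℝ) (hA1 : (3.012:ℝ) ≤ A) (hA2 : A ≤ 3.013)
    (hl : ((12:ℝ)/25) ≤ ω) (hu : ω ≤ ((51:ℝ)/100)) :
    (2.44140625:ℝ) ≤ (1.13 - A * Real.cos (1.58*ω))^2 + (A * Real.sin (1.58*ω) - ω)^2 := by
  have hpl : (3.141592:ℝ) < Real.pi := Real.pi_gt_d6
  have hpu : Real.pi < (3.141593:ℝ) := Real.pi_lt_d6
  obtain ⟨x, hx⟩ : ∃ y : ℝ, y = 1.58*ω := ⟨_, rfl⟩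
  have hd1 : ((474:ℝ)/625) ≤ x := by rw [hx]; linarith
  have hd2 : x ≤ ((4029:ℝ)/5000) := by rw [hx]; linarith
  have hm1 : (-1:ℝ) ≤ x := by linarith
  have hm2 : x ≤ (1:ℝ) := by linarith
  obtain ⟨hc1, hc2, hs1, hs2⟩ := cos_sin_window hm1 hm2
  have hx2u : x^2 ≤ ((324657:ℝ)/500000) := by nlinarith [mul_nonneg (by linarith : (0:ℝ) ≤ x - ((474:ℝ)/625)) (by linarith : (0:ℝ) ≤ ((4029:ℝ)/5000) - x)]
  have hx2l : ((57517:ℝ)/100000) ≤ x^2 := by nlinarith [mul_nonneg (by linarith : (0:ℝ) ≤ x - ((474:ℝ)/625)) (by linarith : (0:ℝ) ≤ x + ((474:ℝ)/625))]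
  have hx4 : x^4 ≤ ((421609:ℝ)/1000000) := by nlinarith [mul_nonneg (by linarith : (0:ℝ) ≤ ((324657:ℝ)/500000) - x^2) (by positivity : (0:ℝ) ≤ ((324657:ℝ)/500000) + x^2)]
  have hx3u : x^3 ≤ ((523217:ℝ)/1000000) := by nlinarith [mul_nonneg (by linarith : (0:ℝ) ≤ ((4029:ℝ)/5000) - x) (by nlinarith [sq_nonneg (2*x + ((4029:ℝ)/5000))] : (0:ℝ) ≤ x^2 + ((4029:ℝ)/5000)*x + ((4029:ℝ)/5000)^2)]
  have hx3l : ((436209:ℝ)/1000000) ≤ x^3 := by nlinarith [mul_nonneg (by linarith : (0:ℝ) ≤ x - ((474:ℝ)/625)) (by nlinarith [sq_nonneg (2*x + ((474:ℝ)/625))] : (0:ℝ) ≤ x^2 + ((474:ℝ)/625)*x + ((474:ℝ)/625)^2)]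
  have hC1 : ((81673:ℝ)/125000) ≤ Real.cos x := by linarith
  have hC2 : Real.cos x ≤ ((367187:ℝ)/500000) := by linarith
  have hS1 : ((324619:ℝ)/500000) ≤ Real.sin x := by linarith
  have hS2 : Real.sin x ≤ ((377529:ℝ)/500000) := by linarith
  rw [← hx]
  have hB1 : 1.13 - A * (Real.cos x) ≤ ((-104749:ℝ)/125000) := by nlinarith
  have hB2 : ((22586:ℝ)/15625) ≤ A * (Real.sin x) - ω := by nlinarith
  nlinarith [hB1, sq_nonneg (1.13 - A * (Real.cos x) - ((-104749:ℝ)/125000)), hB2, sq_nonneg (A * (Real.sin x) - ω - ((22586:ℝ)/15625))]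

set_option maxHeartbeats 1000000 in
lemma case7 (A ω : ℝ) (hA1 : (3.012:ℝ) ≤ A) (hA2 : A ≤ 3.013)
    (hl : ((51:ℝ)/100) ≤ ω) (hu : ω ≤ ((59:ℝ)/100)) :
    (2.44140625:ℝ) ≤ (1.13 - A * Real.cos (1.58*ω))^2 + (A * Real.sin (1.58*ω) - ω)^2 := by
  have hpl : (3.141592:ℝ) < Real.pi := Real.pi_gt_d6
  have hpu : Real.pi < (3.141593:ℝ) := Real.pi_lt_d6
  obtain ⟨x, hx⟩ : ∃ y : ℝ, y = 1.58*ω - Real.pi/2 := ⟨_, rfl⟩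
  have hd1 : ((-764997:ℝ)/1000000) ≤ x := by rw [hx]; linarith
  have hd2 : x ≤ ((-159649:ℝ)/250000) := by rw [hx]; linarith
  have hm1 : (-1:ℝ) ≤ x := by linarith
  have hm2 : x ≤ (1:ℝ) := by linarith
  obtain ⟨hc1, hc2, hs1, hs2⟩ := cos_sin_window hm1 hm2
  have hx2u : x^2 ≤ ((585221:ℝ)/1000000) := by nlinarith [mul_nonneg (by linarith : (0:ℝ) ≤ x - ((-764997:ℝ)/1000000)) (by linarith : (0:ℝ) ≤ ((-159649:ℝ)/250000) - x)]
  have hx2l : ((101951:ℝ)/250000) ≤ x^2 := by nlinarith [mul_nonneg (by linarith : (0:ℝ) ≤ ((-159649:ℝ)/250000) - x) (by linarith : (0:ℝ) ≤ -((-159649:ℝ)/250000) - x)]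
  have hx4 : x^4 ≤ ((85621:ℝ)/250000) := by nlinarith [mul_nonneg (by linarith : (0:ℝ) ≤ ((585221:ℝ)/1000000) - x^2) (by positivity : (0:ℝ) ≤ ((585221:ℝ)/1000000) + x^2)]
  have hx3u : x^3 ≤ ((-130211:ℝ)/500000) := by nlinarith [mul_nonneg (by linarith : (0:ℝ) ≤ ((-159649:ℝ)/250000) - x) (by nlinarith [sq_nonneg (2*x + ((-159649:ℝ)/250000))] : (0:ℝ) ≤ x^2 + ((-159649:ℝ)/250000)*x + ((-159649:ℝ)/250000)^2)]
  have hx3l : ((-111923:ℝ)/250000) ≤ x^3 := by nlinarith [mul_nonneg (by linarith : (0:ℝ) ≤ x - ((-764997:ℝ)/1000000)) (by nlinarith [sq_nonneg (2*x + ((-764997:ℝ)/1000000))] : (0:ℝ) ≤ x^2 + ((-764997:ℝ)/1000000)*x + ((-764997:ℝ)/1000000)^2)]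
  have hC1 : ((689551:ℝ)/1000000) ≤ Real.cos x := by linarith
  have hC2 : Real.cos x ≤ ((50871:ℝ)/62500) := by linarith
  have hS1 : ((-92429:ℝ)/125000) ≤ Real.sin x := by linarith
  have hS2 : Real.sin x ≤ ((-273071:ℝ)/500000) := by linarith
  have hrot : (1.58:ℝ)*ω = x + Real.pi/2 := by rw [hx]; ring
  rw [hrot, Real.cos_add_pi_div_two, Real.sin_add_pi_div_two]
  have hB1 : 1.13 - A * (-Real.sin x) ≤ ((-514979:ℝ)/1000000) := by nlinarith
  have hB2 : ((1486927:ℝ)/1000000) ≤ A * (Real.cos x) - ω := by nlinarith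
  nlinarith [hB1, sq_nonneg (1.13 - A * (-Real.sin x) - ((-514979:ℝ)/1000000)), hB2, sq_nonneg (A * (Real.cos x) - ω - ((1486927:ℝ)/1000000))]

set_option maxHeartbeats 1000000 in
lemma case8 (A ω : ℝ) (hA1 : (3.012:ℝ) ≤ A) (hA2 : A ≤ 3.013)
    (hl : ((59:ℝ)/100) ≤ ω) (hu : ω ≤ ((19:ℝ)/25)) :
    (2.44140625:ℝ) ≤ (1.13 - A * Real.cos (1.58*ω))^2 + (A * Real.sin (1.58*ω) - ω)^2 := by
  have hpl : (3.141592:ℝ) < Real.pi := Real.pi_gt_d6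
  have hpu : Real.pi < (3.141593:ℝ) := Real.pi_lt_d6
  obtain ⟨x, hx⟩ : ∃ y : ℝ, y = 1.58*ω - Real.pi/2 := ⟨_, rfl⟩
  have hd1 : ((-638597:ℝ)/1000000) ≤ x := by rw [hx]; linarith
  have hd2 : x ≤ ((-92499:ℝ)/250000) := by rw [hx]; linarith
  have hm1 : (-1:ℝ) ≤ x := by linarith
  have hm2 : x ≤ (1:ℝ) := by linarith
  obtain ⟨hc1, hc2, hs1, hs2⟩ := cos_sin_window hm1 hm2
  have hx2u : x^2 ≤ ((407807:ℝ)/1000000) := by nlinarith [mul_nonneg (by linarith : (0:ℝ) ≤ x - ((-638597:ℝ)/1000000)) (by linarith : (0:ℝ) ≤ ((-92499:ℝ)/250000) - x)]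
  have hx2l : ((136897:ℝ)/1000000) ≤ x^2 := by nlinarith [mul_nonneg (by linarith : (0:ℝ) ≤ ((-92499:ℝ)/250000) - x) (by linarith : (0:ℝ) ≤ -((-92499:ℝ)/250000) - x)]
  have hx4 : x^4 ≤ ((166307:ℝ)/1000000) := by nlinarith [mul_nonneg (by linarith : (0:ℝ) ≤ ((407807:ℝ)/1000000) - x^2) (by positivity : (0:ℝ) ≤ ((407807:ℝ)/1000000) + x^2)]
  have hx3u : x^3 ≤ ((-50651:ℝ)/1000000) := by nlinarith [mul_nonneg (by linarith : (0:ℝ) ≤ ((-92499:ℝ)/250000) - x) (by nlinarith [sq_nonneg (2*x + ((-92499:ℝ)/250000))] : (0:ℝ) ≤ x^2 + ((-92499:ℝ)/250000)*x + ((-92499:ℝ)/250000)^2)]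
  have hx3l : ((-32553:ℝ)/125000) ≤ x^3 := by nlinarith [mul_nonneg (by linarith : (0:ℝ) ≤ x - ((-638597:ℝ)/1000000)) (by nlinarith [sq_nonneg (2*x + ((-638597:ℝ)/1000000))] : (0:ℝ) ≤ x^2 + ((-638597:ℝ)/1000000)*x + ((-638597:ℝ)/1000000)^2)]
  have hC1 : ((393717:ℝ)/500000) ≤ Real.cos x := by linarith
  have hC2 : Real.cos x ≤ ((470107:ℝ)/500000) := by linarith
  have hS1 : ((-638817:ℝ)/1000000) ≤ Real.sin x := by linarith
  have hS2 : Real.sin x ≤ ((-31793:ℝ)/100000) := by linarith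
  have hrot : (1.58:ℝ)*ω = x + Real.pi/2 := by rw [hx]; ring
  rw [hrot, Real.cos_add_pi_div_two, Real.sin_add_pi_div_two]
  have hB2 : ((1611751:ℝ)/1000000) ≤ A * (Real.cos x) - ω := by nlinarith
  nlinarith [sq_nonneg (1.13 - A * (-Real.sin x)), hB2, sq_nonneg (A * (Real.cos x) - ω - ((1611751:ℝ)/1000000))]

set_option maxHeartbeats 1000000 in
lemma case9 (A ω : ℝ) (hA1 : (3.012:ℝ) ≤ A) (hA2 : A ≤ 3.013)
    (hl : ((19:ℝ)/25) ≤ ω) (hu : ω ≤ ((6:ℝ)/5)) :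
    (2.44140625:ℝ) ≤ (1.13 - A * Real.cos (1.58*ω))^2 + (A * Real.sin (1.58*ω) - ω)^2 := by
  have hpl : (3.141592:ℝ) < Real.pi := Real.pi_gt_d6
  have hpu : Real.pi < (3.141593:ℝ) := Real.pi_lt_d6
  obtain ⟨x, hx⟩ : ∃ y : ℝ, y = 1.58*ω - Real.pi/2 := ⟨_, rfl⟩
  have hd1 : ((-369997:ℝ)/1000000) ≤ x := by rw [hx]; linarith
  have hd2 : x ≤ ((81301:ℝ)/250000) := by rw [hx]; linarith
  have hm1 : (-1:ℝ) ≤ x := by linarith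
  have hm2 : x ≤ (1:ℝ) := by linarith
  obtain ⟨hc1, hc2, hs1, hs2⟩ := cos_sin_window hm1 hm2
  have hx2u : x^2 ≤ ((68449:ℝ)/500000) := by nlinarith [mul_nonneg (by linarith : (0:ℝ) ≤ x - ((-369997:ℝ)/1000000)) (by linarith : (0:ℝ) ≤ ((81301:ℝ)/250000) - x)]
  have hx2l : (0:ℝ) ≤ x^2 := by positivity
  have hx4 : x^4 ≤ ((9371:ℝ)/500000) := by nlinarith [mul_nonneg (by linarith : (0:ℝ) ≤ ((68449:ℝ)/500000) - x^2) (by positivity : (0:ℝ) ≤ ((68449:ℝ)/500000) + x^2)]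
  have hx3u : x^3 ≤ ((34393:ℝ)/1000000) := by nlinarith [mul_nonneg (by linarith : (0:ℝ) ≤ ((81301:ℝ)/250000) - x) (by nlinarith [sq_nonneg (2*x + ((81301:ℝ)/250000))] : (0:ℝ) ≤ x^2 + ((81301:ℝ)/250000)*x + ((81301:ℝ)/250000)^2)]
  have hx3l : ((-12663:ℝ)/250000) ≤ x^3 := by nlinarith [mul_nonneg (by linarith : (0:ℝ) ≤ x - ((-369997:ℝ)/1000000)) (by nlinarith [sq_nonneg (2*x + ((-369997:ℝ)/1000000))] : (0:ℝ) ≤ x^2 + ((-369997:ℝ)/1000000)*x + ((-369997:ℝ)/1000000)^2)]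
  have hC1 : ((465287:ℝ)/500000) ≤ Real.cos x := by linarith
  have hC2 : Real.cos x ≤ ((1000977:ℝ)/1000000) := by linarith
  have hS1 : ((-188353:ℝ)/500000) ≤ Real.sin x := by linarith
  have hS2 : Real.sin x ≤ ((334623:ℝ)/1000000) := by linarith
  have hrot : (1.58:ℝ)*ω = x + Real.pi/2 := by rw [hx]; ring
  rw [hrot, Real.cos_add_pi_div_two, Real.sin_add_pi_div_two]
  have hB2 : ((200361:ℝ)/125000) ≤ A * (Real.cos x) - ω := by nlinarith
  nlinarith [sq_nonneg (1.13 - A * (-Real.sin x)), hB2, sq_nonneg (A * (Real.cos x) - ω - ((200361:ℝ)/125000))]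

set_option maxHeartbeats 1000000 in
lemma case10 (A ω : ℝ) (hA1 : (3.012:ℝ) ≤ A) (hA2 : A ≤ 3.013)
    (hl : ((6:ℝ)/5) ≤ ω) (hu : ω ≤ ((31:ℝ)/20)) :
    (2.44140625:ℝ) ≤ (1.13 - A * Real.cos (1.58*ω))^2 + (A * Real.sin (1.58*ω) - ω)^2 := by
  have hpl : (3.141592:ℝ) < Real.pi := Real.pi_gt_d6
  have hpu : Real.pi < (3.141593:ℝ) := Real.pi_lt_d6
  obtain ⟨x, hx⟩ : ∃ y : ℝ, y = 1.58*ω - Real.pi/2 := ⟨_, rfl⟩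
  have hd1 : ((325203:ℝ)/1000000) ≤ x := by rw [hx]; linarith
  have hd2 : x ≤ ((219551:ℝ)/250000) := by rw [hx]; linarith
  have hm1 : (-1:ℝ) ≤ x := by linarith
  have hm2 : x ≤ (1:ℝ) := by linarith
  obtain ⟨hc1, hc2, hs1, hs2⟩ := cos_sin_window hm1 hm2
  have hx2u : x^2 ≤ ((771243:ℝ)/1000000) := by nlinarith [mul_nonneg (by linarith : (0:ℝ) ≤ x - ((325203:ℝ)/1000000)) (by linarith : (0:ℝ) ≤ ((219551:ℝ)/250000) - x)]
  have hx2l : ((26439:ℝ)/250000) ≤ x^2 := by nlinarith [mul_nonneg (by linarith : (0:ℝ) ≤ x - ((325203:ℝ)/1000000)) (by linarith : (0:ℝ) ≤ x + ((325203:ℝ)/1000000))]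
  have hx4 : x^4 ≤ ((9294:ℝ)/15625) := by nlinarith [mul_nonneg (by linarith : (0:ℝ) ≤ ((771243:ℝ)/1000000) - x^2) (by positivity : (0:ℝ) ≤ ((771243:ℝ)/1000000) + x^2)]
  have hx3u : x^3 ≤ ((677309:ℝ)/1000000) := by nlinarith [mul_nonneg (by linarith : (0:ℝ) ≤ ((219551:ℝ)/250000) - x) (by nlinarith [sq_nonneg (2*x + ((219551:ℝ)/250000))] : (0:ℝ) ≤ x^2 + ((219551:ℝ)/250000)*x + ((219551:ℝ)/250000)^2)]
  have hx3l : ((4299:ℝ)/125000) ≤ x^3 := by nlinarith [mul_nonneg (by linarith : (0:ℝ) ≤ x - ((325203:ℝ)/1000000)) (by nlinarith [sq_nonneg (2*x + ((325203:ℝ)/1000000))] : (0:ℝ) ≤ x^2 + ((325203:ℝ)/1000000)*x + ((325203:ℝ)/1000000)^2)]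
  have hC1 : ((291699:ℝ)/500000) ≤ Real.cos x := by linarith
  have hC2 : Real.cos x ≤ ((489051:ℝ)/500000) := by linarith
  have hS1 : ((90669:ℝ)/500000) ≤ Real.sin x := by linarith
  have hS2 : Real.sin x ≤ ((225863:ℝ)/250000) := by linarith
  have hrot : (1.58:ℝ)*ω = x + Real.pi/2 := by rw [hx]; ring
  rw [hrot, Real.cos_add_pi_div_two, Real.sin_add_pi_div_two]
  have hB1 : ((167619:ℝ)/100000) ≤ 1.13 - A * (-Real.sin x) := by nlinarith
  have hB2 : ((103597:ℝ)/500000) ≤ A * (Real.cos x) - ω := by nlinarith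
  nlinarith [hB1, sq_nonneg (1.13 - A * (-Real.sin x) - ((167619:ℝ)/100000)), hB2, sq_nonneg (A * (Real.cos x) - ω - ((103597:ℝ)/500000))]

set_option maxHeartbeats 1000000 in
lemma case11 (A ω : ℝ) (hA1 : (3.012:ℝ) ≤ A) (hA2 : A ≤ 3.013)
    (hl : ((31:ℝ)/20) ≤ ω) (hu : ω ≤ ((13:ℝ)/5)) :
    (2.44140625:ℝ) ≤ (1.13 - A * Real.cos (1.58*ω))^2 + (A * Real.sin (1.58*ω) - ω)^2 := by
  have hpl : (3.141592:ℝ) < Real.pi := Real.pi_gt_d6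
  have hpu : Real.pi < (3.141593:ℝ) := Real.pi_lt_d6
  obtain ⟨x, hx⟩ : ∃ y : ℝ, y = 1.58*ω - Real.pi := ⟨_, rfl⟩
  have hd1 : ((-692593:ℝ)/1000000) ≤ x := by rw [hx]; linarith
  have hd2 : x ≤ ((120801:ℝ)/125000) := by rw [hx]; linarith
  have hm1 : (-1:ℝ) ≤ x := by linarith
  have hm2 : x ≤ (1:ℝ) := by linarith
  obtain ⟨hc1, hc2, hs1, hs2⟩ := cos_sin_window hm1 hm2
  have hx2u : x^2 ≤ ((186789:ℝ)/200000) := by nlinarith [mul_nonneg (by linarith : (0:ℝ) ≤ x - ((-692593:ℝ)/1000000)) (by linarith : (0:ℝ) ≤ ((120801:ℝ)/125000) - x)]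
  have hx2l : (0:ℝ) ≤ x^2 := by positivity
  have hx4 : x^4 ≤ ((436127:ℝ)/500000) := by nlinarith [mul_nonneg (by linarith : (0:ℝ) ≤ ((186789:ℝ)/200000) - x^2) (by positivity : (0:ℝ) ≤ ((186789:ℝ)/200000) + x^2)]
  have hx3u : x^3 ≤ ((225643:ℝ)/250000) := by nlinarith [mul_nonneg (by linarith : (0:ℝ) ≤ ((120801:ℝ)/125000) - x) (by nlinarith [sq_nonneg (2*x + ((120801:ℝ)/125000))] : (0:ℝ) ≤ x^2 + ((120801:ℝ)/125000)*x + ((120801:ℝ)/125000)^2)]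
  have hx3l : ((-332227:ℝ)/1000000) ≤ x^3 := by nlinarith [mul_nonneg (by linarith : (0:ℝ) ≤ x - ((-692593:ℝ)/1000000)) (by nlinarith [sq_nonneg (2*x + ((-692593:ℝ)/1000000))] : (0:ℝ) ≤ x^2 + ((-692593:ℝ)/1000000)*x + ((-692593:ℝ)/1000000)^2)]
  have hC1 : ((487597:ℝ)/1000000) ≤ Real.cos x := by linarith
  have hC2 : Real.cos x ≤ ((104543:ℝ)/100000) := by linarith
  have hS1 : ((-222113:ℝ)/250000) ≤ Real.sin x := by linarith
  have hS2 : Real.sin x ≤ ((106721:ℝ)/100000) := by linarith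
  have hrot : (1.58:ℝ)*ω = x + Real.pi := by rw [hx]; ring
  rw [hrot, Real.cos_add_pi, Real.sin_add_pi]
  have hB1 : ((1299321:ℝ)/500000) ≤ 1.13 - A * (-Real.cos x) := by nlinarith
  nlinarith [hB1, sq_nonneg (1.13 - A * (-Real.cos x) - ((1299321:ℝ)/500000)), sq_nonneg (A * (-Real.sin x) - ω)]

set_option maxHeartbeats 1000000 in
lemma case12 (A ω : ℝ) (hA1 : (3.012:ℝ) ≤ A) (hA2 : A ≤ 3.013)
    (hl : ((13:ℝ)/5) ≤ ω) (hu : ω ≤ ((7:ℝ)/2)) :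
    (2.44140625:ℝ) ≤ (1.13 - A * Real.cos (1.58*ω))^2 + (A * Real.sin (1.58*ω) - ω)^2 := by
  have hpl : (3.141592:ℝ) < Real.pi := Real.pi_gt_d6
  have hpu : Real.pi < (3.141593:ℝ) := Real.pi_lt_d6
  obtain ⟨x, hx⟩ : ∃ y : ℝ, y = 1.58*ω - (Real.pi + Real.pi/2) := ⟨_, rfl⟩
  have hd1 : ((-60439:ℝ)/100000) ≤ x := by rw [hx]; linarith
  have hd2 : x ≤ ((204403:ℝ)/250000) := by rw [hx]; linarith
  have hm1 : (-1:ℝ) ≤ x := by linarith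
  have hm2 : x ≤ (1:ℝ) := by linarith
  obtain ⟨hc1, hc2, hs1, hs2⟩ := cos_sin_window hm1 hm2
  have hx2u : x^2 ≤ ((66849:ℝ)/100000) := by nlinarith [mul_nonneg (by linarith : (0:ℝ) ≤ x - ((-60439:ℝ)/100000)) (by linarith : (0:ℝ) ≤ ((204403:ℝ)/250000) - x)]
  have hx2l : (0:ℝ) ≤ x^2 := by positivity
  have hx4 : x^4 ≤ ((446879:ℝ)/1000000) := by nlinarith [mul_nonneg (by linarith : (0:ℝ) ≤ ((66849:ℝ)/100000) - x^2) (by positivity : (0:ℝ) ≤ ((66849:ℝ)/100000) + x^2)]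
  have hx3u : x^3 ≤ ((109313:ℝ)/200000) := by nlinarith [mul_nonneg (by linarith : (0:ℝ) ≤ ((204403:ℝ)/250000) - x) (by nlinarith [sq_nonneg (2*x + ((204403:ℝ)/250000))] : (0:ℝ) ≤ x^2 + ((204403:ℝ)/250000)*x + ((204403:ℝ)/250000)^2)]
  have hx3l : ((-27597:ℝ)/125000) ≤ x^3 := by nlinarith [mul_nonneg (by linarith : (0:ℝ) ≤ x - ((-60439:ℝ)/100000)) (by nlinarith [sq_nonneg (2*x + ((-60439:ℝ)/100000))] : (0:ℝ) ≤ x^2 + ((-60439:ℝ)/100000)*x + ((-60439:ℝ)/100000)^2)]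
  have hC1 : ((8031:ℝ)/12500) ≤ Real.cos x := by linarith
  have hC2 : Real.cos x ≤ ((40931:ℝ)/40000) := by linarith
  have hS1 : ((-17969:ℝ)/25000) ≤ Real.sin x := by linarith
  have hS2 : Real.sin x ≤ ((877683:ℝ)/1000000) := by linarith
  have hrot : (1.58:ℝ)*ω = (x + Real.pi) + Real.pi/2 := by rw [hx]; ring
  rw [hrot, Real.cos_add_pi_div_two, Real.sin_add_pi_div_two, Real.cos_add_pi, Real.sin_add_pi, neg_neg]
  have hB2 : A * (-Real.cos x) - ω ≤ ((-4535149:ℝ)/1000000) := by nlinarith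
  nlinarith [sq_nonneg (1.13 - A * (Real.sin x)), hB2, sq_nonneg (A * (-Real.cos x) - ω - ((-4535149:ℝ)/1000000))]

set_option maxHeartbeats 1000000 in
lemma case13 (A ω : ℝ) (hA1 : (3.012:ℝ) ≤ A) (hA2 : A ≤ 3.013)
    (hl : ((7:ℝ)/2) ≤ ω) (hu : ω ≤ ((433:ℝ)/100)) :
    (2.44140625:ℝ) ≤ (1.13 - A * Real.cos (1.58*ω))^2 + (A * Real.sin (1.58*ω) - ω)^2 := by
  have hpl : (3.141592:ℝ) < Real.pi := Real.pi_gt_d6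
  have hpu : Real.pi < (3.141593:ℝ) := Real.pi_lt_d6
  obtain ⟨x, hx⟩ : ∃ y : ℝ, y = 1.58*ω - 2*Real.pi := ⟨_, rfl⟩
  have hd1 : ((-376593:ℝ)/500000) ≤ x := by rw [hx]; linarith
  have hd2 : x ≤ ((69777:ℝ)/125000) := by rw [hx]; linarith
  have hm1 : (-1:ℝ) ≤ x := by linarith
  have hm2 : x ≤ (1:ℝ) := by linarith
  obtain ⟨hc1, hc2, hs1, hs2⟩ := cos_sin_window hm1 hm2
  have hx2u : x^2 ≤ ((56729:ℝ)/100000) := by nlinarith [mul_nonneg (by linarith : (0:ℝ) ≤ x - ((-376593:ℝ)/500000)) (by linarith : (0:ℝ) ≤ ((69777:ℝ)/125000) - x)]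
  have hx2l : (0:ℝ) ≤ x^2 := by positivity
  have hx4 : x^4 ≤ ((160909:ℝ)/500000) := by nlinarith [mul_nonneg (by linarith : (0:ℝ) ≤ ((56729:ℝ)/100000) - x^2) (by positivity : (0:ℝ) ≤ ((56729:ℝ)/100000) + x^2)]
  have hx3u : x^3 ≤ ((173943:ℝ)/1000000) := by nlinarith [mul_nonneg (by linarith : (0:ℝ) ≤ ((69777:ℝ)/125000) - x) (by nlinarith [sq_nonneg (2*x + ((69777:ℝ)/125000))] : (0:ℝ) ≤ x^2 + ((69777:ℝ)/125000)*x + ((69777:ℝ)/125000)^2)]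
  have hx3l : ((-17091:ℝ)/40000) ≤ x^3 := by nlinarith [mul_nonneg (by linarith : (0:ℝ) ≤ x - ((-376593:ℝ)/500000)) (by nlinarith [sq_nonneg (2*x + ((-376593:ℝ)/500000))] : (0:ℝ) ≤ x^2 + ((-376593:ℝ)/500000)*x + ((-376593:ℝ)/500000)^2)]
  have hC1 : ((699593:ℝ)/1000000) ≤ Real.cos x := by linarith
  have hC2 : Real.cos x ≤ ((508381:ℝ)/500000) := by linarith
  have hS1 : ((-399469:ℝ)/500000) ≤ Real.sin x := by linarith
  have hS2 : Real.sin x ≤ ((64619:ℝ)/100000) := by linarith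
  have hrot : (1.58:ℝ)*ω = x + 2*Real.pi := by rw [hx]; ring
  rw [hrot, Real.cos_add_two_pi, Real.sin_add_two_pi]
  have hB1 : 1.13 - A * (Real.cos x) ≤ ((-488587:ℝ)/500000) := by nlinarith
  have hB2 : A * (Real.sin x) - ω ≤ ((-1553029:ℝ)/1000000) := by nlinarith
  nlinarith [hB1, sq_nonneg (1.13 - A * (Real.cos x) - ((-488587:ℝ)/500000)), hB2, sq_nonneg (A * (Real.sin x) - ω - ((-1553029:ℝ)/1000000))]

set_option maxHeartbeats 1000000 in
lemma case14 (A ω : ℝ) (hA1 : (3.012:ℝ) ≤ A) (hA2 : A ≤ 3.013)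
    (hl : ((433:ℝ)/100) ≤ ω) (hu : ω ≤ ((223:ℝ)/50)) :
    (2.44140625:ℝ) ≤ (1.13 - A * Real.cos (1.58*ω))^2 + (A * Real.sin (1.58*ω) - ω)^2 := by
  have hpl : (3.141592:ℝ) < Real.pi := Real.pi_gt_d6
  have hpu : Real.pi < (3.141593:ℝ) := Real.pi_lt_d6
  obtain ⟨x, hx⟩ : ∃ y : ℝ, y = 1.58*ω - 2*Real.pi := ⟨_, rfl⟩
  have hd1 : ((279107:ℝ)/500000) ≤ x := by rw [hx]; linarith
  have hd2 : x ≤ ((23863:ℝ)/31250) := by rw [hx]; linarith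
  have hm1 : (-1:ℝ) ≤ x := by linarith
  have hm2 : x ≤ (1:ℝ) := by linarith
  obtain ⟨hc1, hc2, hs1, hs2⟩ := cos_sin_window hm1 hm2
  have hx2u : x^2 ≤ ((58311:ℝ)/100000) := by nlinarith [mul_nonneg (by linarith : (0:ℝ) ≤ x - ((279107:ℝ)/500000)) (by linarith : (0:ℝ) ≤ ((23863:ℝ)/31250) - x)]
  have hx2l : ((155801:ℝ)/500000) ≤ x^2 := by nlinarith [mul_nonneg (by linarith : (0:ℝ) ≤ x - ((279107:ℝ)/500000)) (by linarith : (0:ℝ) ≤ x + ((279107:ℝ)/500000))]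
  have hx4 : x^4 ≤ ((170009:ℝ)/500000) := by nlinarith [mul_nonneg (by linarith : (0:ℝ) ≤ ((58311:ℝ)/100000) - x^2) (by positivity : (0:ℝ) ≤ ((58311:ℝ)/100000) + x^2)]
  have hx3u : x^3 ≤ ((55659:ℝ)/125000) := by nlinarith [mul_nonneg (by linarith : (0:ℝ) ≤ ((23863:ℝ)/31250) - x) (by nlinarith [sq_nonneg (2*x + ((23863:ℝ)/31250))] : (0:ℝ) ≤ x^2 + ((23863:ℝ)/31250)*x + ((23863:ℝ)/31250)^2)]
  have hx3l : ((173941:ℝ)/1000000) ≤ x^3 := by nlinarith [mul_nonneg (by linarith : (0:ℝ) ≤ x - ((279107:ℝ)/500000)) (by nlinarith [sq_nonneg (2*x + ((279107:ℝ)/500000))] : (0:ℝ) ≤ x^2 + ((279107:ℝ)/500000)*x + ((279107:ℝ)/500000)^2)]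
  have hC1 : ((138147:ℝ)/200000) ≤ Real.cos x := by linarith
  have hC2 : Real.cos x ≤ ((861909:ℝ)/1000000) := by linarith
  have hS1 : ((116573:ℝ)/250000) ≤ Real.sin x := by linarith
  have hS2 : Real.sin x ≤ ((47021:ℝ)/62500) := by linarith
  have hrot : (1.58:ℝ)*ω = x + 2*Real.pi := by rw [hx]; ring
  rw [hrot, Real.cos_add_two_pi, Real.sin_add_two_pi]
  have hB1 : 1.13 - A * (Real.cos x) ≤ ((-950493:ℝ)/1000000) := by nlinarith
  have hB2 : A * (Real.sin x) - ω ≤ ((-2063211:ℝ)/1000000) := by nlinarith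
  nlinarith [hB1, sq_nonneg (1.13 - A * (Real.cos x) - ((-950493:ℝ)/1000000)), hB2, sq_nonneg (A * (Real.sin x) - ω - ((-2063211:ℝ)/1000000))]

set_option maxHeartbeats 1000000 in
lemma case15 (A ω : ℝ) (hA1 : (3.012:ℝ) ≤ A) (hA2 : A ≤ 3.013)
    (hl : ((223:ℝ)/50) ≤ ω) (hu : ω ≤ ((229:ℝ)/50)) :
    (2.44140625:ℝ) ≤ (1.13 - A * Real.cos (1.58*ω))^2 + (A * Real.sin (1.58*ω) - ω)^2 := by
  have hpl : (3.141592:ℝ) < Real.pi := Real.pi_gt_d6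
  have hpu : Real.pi < (3.141593:ℝ) := Real.pi_lt_d6
  obtain ⟨x, hx⟩ : ∃ y : ℝ, y = 1.58*ω - 2*Real.pi := ⟨_, rfl⟩
  have hd1 : ((381807:ℝ)/500000) ≤ x := by rw [hx]; linarith
  have hd2 : x ≤ ((14894:ℝ)/15625) := by rw [hx]; linarith
  have hm1 : (-1:ℝ) ≤ x := by linarith
  have hm2 : x ≤ (1:ℝ) := by linarith
  obtain ⟨hc1, hc2, hs1, hs2⟩ := cos_sin_window hm1 hm2
  have hx2u : x^2 ≤ ((908621:ℝ)/1000000) := by nlinarith [mul_nonneg (by linarith : (0:ℝ) ≤ x - ((381807:ℝ)/500000)) (by linarith : (0:ℝ) ≤ ((14894:ℝ)/15625) - x)]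
  have hx2l : ((291553:ℝ)/500000) ≤ x^2 := by nlinarith [mul_nonneg (by linarith : (0:ℝ) ≤ x - ((381807:ℝ)/500000)) (by linarith : (0:ℝ) ≤ x + ((381807:ℝ)/500000))]
  have hx4 : x^4 ≤ ((825593:ℝ)/1000000) := by nlinarith [mul_nonneg (by linarith : (0:ℝ) ≤ ((908621:ℝ)/1000000) - x^2) (by positivity : (0:ℝ) ≤ ((908621:ℝ)/1000000) + x^2)]
  have hx3u : x^3 ≤ ((13533:ℝ)/15625) := by nlinarith [mul_nonneg (by linarith : (0:ℝ) ≤ ((14894:ℝ)/15625) - x) (by nlinarith [sq_nonneg (2*x + ((14894:ℝ)/15625))] : (0:ℝ) ≤ x^2 + ((14894:ℝ)/15625)*x + ((14894:ℝ)/15625)^2)]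
  have hx3l : ((111317:ℝ)/250000) ≤ x^3 := by nlinarith [mul_nonneg (by linarith : (0:ℝ) ≤ x - ((381807:ℝ)/500000)) (by nlinarith [sq_nonneg (2*x + ((381807:ℝ)/500000))] : (0:ℝ) ≤ x^2 + ((381807:ℝ)/500000)*x + ((381807:ℝ)/500000)^2)]
  have hC1 : ((502689:ℝ)/1000000) ≤ Real.cos x := by linarith
  have hC2 : Real.cos x ≤ ((751447:ℝ)/1000000) := by linarith
  have hS1 : ((288131:ℝ)/500000) ≤ Real.sin x := by linarith
  have hS2 : Real.sin x ≤ ((184401:ℝ)/200000) := by linarith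
  have hrot : (1.58:ℝ)*ω = x + 2*Real.pi := by rw [hx]; ring
  rw [hrot, Real.cos_add_two_pi, Real.sin_add_two_pi]
  have hB1 : 1.13 - A * (Real.cos x) ≤ ((-384099:ℝ)/1000000) := by nlinarith
  have hB2 : A * (Real.sin x) - ω ≤ ((-840999:ℝ)/500000) := by nlinarith
  nlinarith [hB1, sq_nonneg (1.13 - A * (Real.cos x) - ((-384099:ℝ)/1000000)), hB2, sq_nonneg (A * (Real.sin x) - ω - ((-840999:ℝ)/500000))]

lemma key (A ω : ℝ) (hA1 : (3.012:ℝ) ≤ A) (hA2 : A ≤ 3.013) (hω : 0 ≤ ω) :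
    (2.44140625:ℝ) ≤ (1.13 - A * Real.cos (1.58*ω))^2 + (A * Real.sin (1.58*ω) - ω)^2 := by
  rcases le_or_gt (4.58:ℝ) ω with hbig | hsmall
  · have hsle := Real.sin_le_one (1.58*ω)
    have hB : A * Real.sin (1.58*ω) - ω ≤ -1.567 := by nlinarith
    nlinarith [sq_nonneg (1.13 - A * Real.cos (1.58*ω)), sq_nonneg (A * Real.sin (1.58*ω) - ω + 1.567)]
  rcases le_or_gt ω ((1:ℝ)/4) with h0 | hg0
  · exact case0 A ω hA1 hA2 hω h0
  rcases le_or_gt ω ((3:ℝ)/10) with h1 | hg1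
  · exact case1 A ω hA1 hA2 (le_of_lt hg0) h1
  rcases le_or_gt ω ((9:ℝ)/25) with h2 | hg2
  · exact case2 A ω hA1 hA2 (le_of_lt hg1) h2
  rcases le_or_gt ω ((41:ℝ)/100) with h3 | hg3
  · exact case3 A ω hA1 hA2 (le_of_lt hg2) h3
  rcases le_or_gt ω ((9:ℝ)/20) with h4 | hg4
  · exact case4 A ω hA1 hA2 (le_of_lt hg3) h4
  rcases le_or_gt ω ((12:ℝ)/25) with h5 | hg5
  · exact case5 A ω hA1 hA2 (le_of_lt hg4) h5
  rcases le_or_gt ω ((51:ℝ)/100) with h6 | hg6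
  · exact case6 A ω hA1 hA2 (le_of_lt hg5) h6
  rcases le_or_gt ω ((59:ℝ)/100) with h7 | hg7
  · exact case7 A ω hA1 hA2 (le_of_lt hg6) h7
  rcases le_or_gt ω ((19:ℝ)/25) with h8 | hg8
  · exact case8 A ω hA1 hA2 (le_of_lt hg7) h8
  rcases le_or_gt ω ((6:ℝ)/5) with h9 | hg9
  · exact case9 A ω hA1 hA2 (le_of_lt hg8) h9
  rcases le_or_gt ω ((31:ℝ)/20) with h10 | hg10
  · exact case10 A ω hA1 hA2 (le_of_lt hg9) h10
  rcases le_or_gt ω ((13:ℝ)/5) with h11 | hg11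
  · exact case11 A ω hA1 hA2 (le_of_lt hg10) h11
  rcases le_or_gt ω ((7:ℝ)/2) with h12 | hg12
  · exact case12 A ω hA1 hA2 (le_of_lt hg11) h12
  rcases le_or_gt ω ((433:ℝ)/100) with h13 | hg13
  · exact case13 A ω hA1 hA2 (le_of_lt hg12) h13
  rcases le_or_gt ω ((223:ℝ)/50) with h14 | hg14
  · exact case14 A ω hA1 hA2 (le_of_lt hg13) h14
  exact case15 A ω hA1 hA2 (le_of_lt hg14) (by linarith)

lemma keyAll (A ω : ℝ) (hA1 : (3.012:ℝ) ≤ A) (hA2 : A ≤ 3.013) :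
    (2.44140625:ℝ) ≤ (1.13 - A * Real.cos (1.58*ω))^2 + (A * Real.sin (1.58*ω) - ω)^2 := by
  rcases le_total 0 ω with h | h
  · exact key A ω hA1 hA2 h
  · have hk := key A (-ω) hA1 hA2 (by linarith)
    rw [show (1.58:ℝ)*(-ω) = -(1.58*ω) by ring, Real.cos_neg, Real.sin_neg] at hk
    nlinarith [hk]

lemma expA : (3.012:ℝ) ≤ 0.75 * Real.exp 1.3904 ∧ (0.75:ℝ) * Real.exp 1.3904 ≤ 3.013 := by
  have hx : |(0.6952:ℝ)| ≤ 1 := abs_le.mpr ⟨by norm_num, by norm_num⟩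
  have h := Real.exp_bound hx (n := 8) (by norm_num)
  have habs0 : |(0.6952:ℝ)| = 0.6952 := abs_of_nonneg (by norm_num)
  rw [abs_le, habs0] at h
  norm_num [Finset.sum_range_succ, Nat.factorial] at h
  obtain ⟨h1, h2⟩ := h
  have hsq : Real.exp 1.3904 = Real.exp 0.6952 * Real.exp 0.6952 := by
    rw [← Real.exp_add]; norm_num
  constructor <;> rw [hsq] <;> nlinarith [Real.exp_pos (0.6952:ℝ), h1, h2]



lemma Dform (A ω : ℝ) (hA : A = 0.75 * Real.exp 1.3904) :
    3 * ((0.75:ℝ) : ℂ) - 2 - ((0.75:ℝ) : ℂ) *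
      Complex.exp (-((1.58:ℝ) : ℂ) * (-(0.88 : ℂ) + Complex.I * (ω:ℂ))) -
      (-(0.88 : ℂ) + Complex.I * (ω:ℂ)) =
    ((1.13 - A * Real.cos (1.58*ω) : ℝ) : ℂ) +
      ((A * Real.sin (1.58*ω) - ω : ℝ) : ℂ) * Complex.I := by
  have e1 : -((1.58:ℝ) : ℂ) * (-(0.88 : ℂ) + Complex.I * (ω:ℂ)) =
      ((1.3904:ℝ) : ℂ) + ((-(1.58*ω):ℝ) : ℂ) * Complex.I := by
    push_cast
    norm_num
    ring
  rw [e1, Complex.exp_add, Complex.exp_mul_I, ← Complex.ofReal_exp, ← Complex.ofReal_cos,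
    ← Complex.ofReal_sin, Real.cos_neg, Real.sin_neg, hA]
  push_cast
  norm_num
  ring

lemma absD (A ω : ℝ) (hA1 : (3.012:ℝ) ≤ A) (hA2 : A ≤ 3.013) :
    (1.5625:ℝ) ≤ ‖(((1.13 - A * Real.cos (1.58*ω) : ℝ) : ℂ) +
      ((A * Real.sin (1.58*ω) - ω : ℝ) : ℂ) * Complex.I)‖ := by
  rw [Complex.norm_add_mul_I]
  have h := keyAll A ω hA1 hA2
  have h2 : (1.5625:ℝ) = Real.sqrt (1.5625^2) := (Real.sqrt_sq (by norm_num)).symm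
  rw [h2]
  apply Real.sqrt_le_sqrt
  nlinarith [h]

/-- For `α = 0.75`, `τ = 1.58`, `ν₀ = 0.88` the frequency inequality
`|W(-ν₀ + iω)| ≤ 0.64` holds for all `ω ∈ ℝ`; equivalently
`|(3α - 2 + ν₀) - iω - α e^{τν₀} e^{-iτω}| ≥ 1/0.64`. In particular
`|W(-ν₀ + iω)| < Λ⁻¹` for the Lipschitz constant `Λ = 0.45`. -/
theorem suarez_schopf_frequency_inequality (ω : ℝ) :
    ‖(SStransfer 0.75 1.58 (-(0.88 : ℂ) + Complex.I * (ω : ℂ)))‖ ≤ 0.64 ∧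
    (1 : ℝ) / 0.64 ≤ ‖((3 * (0.75 : ℂ) - 2 + (0.88 : ℂ)) - Complex.I * (ω : ℂ) -
      (0.75 : ℂ) * ((Real.exp (1.58 * 0.88) : ℝ) : ℂ) *
        Complex.exp (-Complex.I * ((1.58 * ω : ℝ) : ℂ)))‖ ∧
    ‖(SStransfer 0.75 1.58 (-(0.88 : ℂ) + Complex.I * (ω : ℂ)))‖ <
      ((0.45 : ℝ))⁻¹ := by
  obtain ⟨hA1, hA2⟩ := expA
  set A : ℝ := 0.75 * Real.exp 1.3904 with hA
  have hD := Dform A ω hA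
  have habs := absD A ω hA1 hA2
  have h1 : ‖(SStransfer 0.75 1.58 (-(0.88 : ℂ) + Complex.I * (ω : ℂ)))‖ ≤ 0.64 := by
    rw [SStransfer, norm_div, norm_one, hD]
    have hpos : (0:ℝ) < ‖(((1.13 - A * Real.cos (1.58*ω) : ℝ) : ℂ) +
      ((A * Real.sin (1.58*ω) - ω : ℝ) : ℂ) * Complex.I)‖ := by linarith
    rw [div_le_iff₀ hpos]
    linarith
  refine ⟨h1, ?_, lt_of_le_of_lt h1 (by norm_num)⟩
  have hD2 : (3 * (0.75 : ℂ) - 2 + (0.88 : ℂ)) - Complex.I * (ω : ℂ) -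
      (0.75 : ℂ) * ((Real.exp (1.58 * 0.88) : ℝ) : ℂ) *
        Complex.exp (-Complex.I * ((1.58 * ω : ℝ) : ℂ)) =
      ((1.13 - A * Real.cos (1.58*ω) : ℝ) : ℂ) +
        ((A * Real.sin (1.58*ω) - ω : ℝ) : ℂ) * Complex.I := by
    rw [show -Complex.I * (((1.58 * ω : ℝ)) : ℂ) = ((-(1.58*ω):ℝ) : ℂ) * Complex.I by
      push_cast; ring]
    rw [Complex.exp_mul_I, ← Complex.ofReal_cos, ← Complex.ofReal_sin, Real.cos_neg,
      Real.sin_neg, show (1.58:ℝ) * 0.88 = 1.3904 by norm_num, hA]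
    push_cast
    norm_num
    ring
  rw [hD2, show (1:ℝ)/0.64 = 1.5625 by norm_num]
  exact habs
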